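/- arXiv:1509.05239 — 2 statements merged into one kernel-verified Lean document; each statement's English description precedes it below -/
import Mathlib

section
/- For the TRIP-Stern sequence for (e,e,e), let α be the real number satisfying α³ − 4α² + 5α − 4 = 0 (the unique real zero of x³ − 4x² + 5x − 4). Then, as n → ∞, S₂(n)/S₁(n) → α − 1 and S₃(n)/S₂(n) → α − 1, where the ratios are taken in ℝ. -/
open Filter Topology

/-- `f₀(a,b,c) = (b,c,a+c)` for the triplet `(e,e,e)`. -/
def f0 (p : ℤ × ℤ × ℤ) : ℤ × ℤ × ℤ := (p.2.1, p.2.2, p.1 + p.2.2)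

/-- `f₁(a,b,c) = (a,b,a+c)` for the triplet `(e,e,e)`. -/
def f1 (p : ℤ × ℤ × ℤ) : ℤ × ℤ × ℤ := (p.1, p.2.1, p.1 + p.2.2)

/-- One step of the TRIP-Stern tree: apply `f₁` on a `true` and `f₀` on a `false`. -/
def step (p : ℤ × ℤ × ℤ) (i : Bool) : ℤ × ℤ × ℤ := if i then f1 p else f0 p

/-- `Δ(v) = f_{iₙ}(⋯ f_{i₁}(1,1,1) ⋯)`, applying `f_{i₁}` first. -/
def delta (v : List Bool) : ℤ × ℤ × ℤ := v.foldl step (1, 1, 1)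

/-- `S₁ n` is the sum of the first coordinates of the level-`n` triples. -/
def S1 (n : ℕ) : ℤ := ∑ v : Fin n → Bool, (delta (List.ofFn v)).1

/-- `S₂ n` is the sum of the second coordinates of the level-`n` triples. -/
def S2 (n : ℕ) : ℤ := ∑ v : Fin n → Bool, (delta (List.ofFn v)).2.1

/-- `S₃ n` is the sum of the third coordinates of the level-`n` triples. -/
def S3 (n : ℕ) : ℤ := ∑ v : Fin n → Bool, (delta (List.ofFn v)).2.2

/-- `S n = S₁ n + S₂ n + S₃ n` is the sum of all entries of level `n`. -/
def S (n : ℕ) : ℤ := S1 n + S2 n + S3 n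

def g (p : ℤ × ℤ × ℤ) (n : ℕ) : ℤ × ℤ × ℤ := ∑ v : Fin n → Bool, (List.ofFn v).foldl step p

def G (p : ℤ × ℤ × ℤ) : ℤ × ℤ × ℤ := (p.1 + p.2.1, p.2.1 + p.2.2, 2*p.1 + 2*p.2.2)

lemma g_succ (p : ℤ × ℤ × ℤ) (n : ℕ) : g p (n+1) = g (f0 p) n + g (f1 p) n := by
  rw [g, ← (Fin.consEquiv (fun _ : Fin (n+1) => Bool)).sum_comp]
  simp only [Fin.consEquiv_apply, Fintype.sum_prod_type, Fintype.sum_bool]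
  rw [add_comm (g (f0 p) n)]
  congr 1 <;> apply Finset.sum_congr rfl <;> intro v _ <;>
    simp [List.ofFn_succ, Fin.cons_zero, Fin.cons_succ, List.foldl_cons, step, g, Fin.consEquiv]

lemma G_add (p q : ℤ × ℤ × ℤ) : G (p + q) = G p + G q := by
  simp [G, Prod.ext_iff, Prod.fst_add, Prod.snd_add]
  refine ⟨by ring, by ring, by ring⟩

lemma g_succ_G (p : ℤ × ℤ × ℤ) (n : ℕ) : g p (n+1) = G (g p n) := by
  induction n generalizing p with
  | zero =>
      rw [g_succ]
      simp [g, G, f0, f1, Prod.ext_iff, Prod.fst_add, Prod.snd_add]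
      refine ⟨by ring, by ring, by ring⟩
  | succ n ih =>
      rw [g_succ, ih, ih, ← G_add, ← g_succ]

lemma W_eq (n : ℕ) : g (1,1,1) n = (S1 n, S2 n, S3 n) := by
  rw [g, S1, S2, S3, Prod.ext_iff, Prod.ext_iff]
  refine ⟨Prod.fst_sum .., ?_, ?_⟩
  · rw [Prod.snd_sum]; exact Prod.fst_sum ..
  · rw [Prod.snd_sum]; exact Prod.snd_sum ..

lemma S1_succ (n : ℕ) : S1 (n+1) = S1 n + S2 n := by
  have := g_succ_G (1,1,1) n
  rw [W_eq, W_eq] at this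
  exact congrArg Prod.fst this

lemma S2_succ (n : ℕ) : S2 (n+1) = S2 n + S3 n := by
  have := g_succ_G (1,1,1) n
  rw [W_eq, W_eq] at this
  exact congrArg (fun p => p.2.1) this

lemma S3_succ (n : ℕ) : S3 (n+1) = 2 * S1 n + 2 * S3 n := by
  have := g_succ_G (1,1,1) n
  rw [W_eq, W_eq] at this
  exact congrArg (fun p => p.2.2) this

lemma S1_zero : S1 0 = 1 := by decide
lemma S2_zero : S2 0 = 1 := by decide
lemma S3_zero : S3 0 = 1 := by decide

lemma foldl_pos : ∀ (l : List Bool) (p : ℤ × ℤ × ℤ), 0 < p.1 → 0 < p.2.1 → 0 < p.2.2 →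
    0 < (l.foldl step p).1 ∧ 0 < (l.foldl step p).2.1 ∧ 0 < (l.foldl step p).2.2 := by
  intro l
  induction l with
  | nil => intro p h1 h2 h3; exact ⟨h1, h2, h3⟩
  | cons c l ih =>
    intro p h1 h2 h3
    cases c
    · exact ih (f0 p) h2 h3 (add_pos h1 h3)
    · exact ih (f1 p) h1 h2 (add_pos h1 h3)

lemma S1_pos (n : ℕ) : 0 < S1 n :=
  Finset.sum_pos (fun v _ => (foldl_pos _ _ one_pos one_pos one_pos).1) Finset.univ_nonempty

lemma S2_pos (n : ℕ) : 0 < S2 n :=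
  Finset.sum_pos (fun v _ => (foldl_pos _ _ one_pos one_pos one_pos).2.1) Finset.univ_nonempty

set_option maxRecDepth 100000 in
lemma S1_one : S1 1 = 2 := by decide

set_option maxRecDepth 100000 in
lemma S1_two : S1 2 = 4 := by decide

set_option maxRecDepth 100000 in
lemma S1_eight : S1 8 = 1532 := by decide

set_option maxHeartbeats 1000000 in
/-- For the TRIP-Stern sequence for `(e,e,e)`, if `α` is the real zero of
`x³ − 4x² + 5x − 4`, then `S₂(n)/S₁(n) → α − 1` and `S₃(n)/S₂(n) → α − 1`
as `n → ∞`. -/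
theorem levelSum_coordinate_ratios_eee (α : ℝ)
    (hα : α ^ 3 - 4 * α ^ 2 + 5 * α - 4 = 0) :
    Tendsto (fun n : ℕ => (S2 n : ℝ) / (S1 n : ℝ)) atTop (𝓝 (α - 1)) ∧
    Tendsto (fun n : ℕ => (S3 n : ℝ) / (S2 n : ℝ)) atTop (𝓝 (α - 1)) := by
  have hαl : 2.69 < α := by
    by_contra h
    push_neg at h
    nlinarith [sq_nonneg (α - 2.69), sq_nonneg (α - 1), sq_nonneg α, sq_nonneg (α + 1)]
  have hαu : α < 2.71 := by
    by_contra h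
    push_neg at h
    nlinarith [sq_nonneg (α - 2.71), sq_nonneg (α - 1), sq_nonneg α]
  have hα0 : (0:ℝ) < α := by linarith
  have hαne : α ≠ 0 := ne_of_gt hα0
  set A : ℕ → ℝ := fun n => (S1 n : ℝ) with hA
  have hApos : ∀ n, 0 < A n := fun n => by
    have := S1_pos n
    simp only [hA]
    exact_mod_cast this
  have hAne : ∀ n, A n ≠ 0 := fun n => (hApos n).ne'
  have hrec : ∀ n, A (n+3) = 4 * A (n+2) - 5 * A (n+1) + 4 * A n := by
    intro n
    have h1 : S1 (n+3) = S1 (n+2) + S2 (n+2) := S1_succ (n+2)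
    have h2 : S1 (n+2) = S1 (n+1) + S2 (n+1) := S1_succ (n+1)
    have h3 : S1 (n+1) = S1 n + S2 n := S1_succ n
    have h4 : S2 (n+2) = S2 (n+1) + S3 (n+1) := S2_succ (n+1)
    have h5 : S2 (n+1) = S2 n + S3 n := S2_succ n
    have h6 : S3 (n+1) = 2 * S1 n + 2 * S3 n := S3_succ n
    have key : S1 (n+3) = 4 * S1 (n+2) - 5 * S1 (n+1) + 4 * S1 n := by omega
    simp only [hA]
    push_cast [key]
    ring
  set b : ℕ → ℝ := fun n => A (n+1) - α * A n with hb
  have hdiv : (4:ℝ)/α = α^2 - 4*α + 5 := by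
    rw [div_eq_iff hαne]
    linear_combination -hα
  have hbrec : ∀ n, b (n+2) = (4 - α) * b (n + 1) - (4/α) * b n := by
    intro n
    have hr := hrec n
    simp only [hb]
    rw [hdiv, show n+2+1 = n+3 by omega, hr]
    linear_combination (-(A n)) * hα
  have hA0 : A 0 = 1 := by simp [hA, S1_zero]
  have hA1 : A 1 = 2 := by simp [hA, S1_one]
  have hA2 : A 2 = 4 := by simp [hA, S1_two]
  have hA8 : A 8 = 1532 := by simp [hA, S1_eight]
  have hbb : ∀ n, |b n| ≤ 0.71 * 2.1^n ∧ |b (n+1)| ≤ 0.71 * 2.1^(n+1) := by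
    intro n
    induction n with
    | zero =>
      constructor
      · simp only [hb, hA1, hA0, mul_one, pow_zero]
        rw [abs_le]
        constructor <;> nlinarith
      · simp only [hb, hA2, hA1]
        rw [abs_le]
        constructor <;> nlinarith
    | succ n ih =>
      refine ⟨ih.2, ?_⟩
      have h := hbrec n
      have h4α : (0:ℝ) ≤ 4 - α := by linarith
      have h4d : (0:ℝ) ≤ 4 / α := by positivity
      have h4d2 : (4:ℝ)/α ≤ 4/2.69 := by
        apply div_le_div_of_nonneg_left (by norm_num) (by norm_num) (by linarith)
      have hkey : (4 - α) * 2.1 + 4 / α ≤ 2.1 ^ 2 := by nlinarith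
      calc |b (n+2)| ≤ (4 - α) * |b (n+1)| + (4/α) * |b n| := by
            rw [h]
            refine (abs_sub _ _).trans ?_
            rw [abs_mul, abs_mul, abs_of_nonneg h4α, abs_of_nonneg h4d]
        _ ≤ (4 - α) * (0.71 * 2.1^(n+1)) + (4/α) * (0.71 * 2.1^n) := by
            gcongr
            exacts [ih.2, ih.1]
        _ = 0.71 * 2.1^n * ((4-α) * 2.1 + 4/α) := by ring
        _ ≤ 0.71 * 2.1^n * 2.1^2 := by gcongr
        _ = 0.71 * 2.1^(n+2) := by ring
  set D : ℝ := 0.71 / (α - 2.1) with hDdef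
  have h21 : α - 2.1 ≠ 0 := by intro h; nlinarith [sub_eq_zero.mp h]
  have hDpos : (0:ℝ) < D := by
    rw [hDdef]; apply div_pos <;> [norm_num; linarith]
  have hDα : D * α = D * 2.1 + 0.71 := by
    rw [hDdef]
    field_simp
    ring
  have hstep : ∀ n, A (n+1) = α * A n + b n := by
    intro n; simp only [hb]; ring
  have hlow : ∀ n, 0.3 * α^(n+8) + D * 2.1^(n+8) ≤ A (n+8) := by
    intro n
    induction n with
    | zero =>
      rw [show (0:ℕ)+8 = 8 by rfl, hA8]
      have hα8 : α^8 ≤ 2.71^8 := by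
        apply pow_le_pow_left₀ (le_of_lt hα0) (le_of_lt hαu)
      have hD : D ≤ 0.71/0.59 := by
        rw [hDdef]
        apply div_le_div_of_nonneg_left (by norm_num) (by norm_num) (by linarith)
      calc 0.3 * α^8 + D * 2.1^8
          ≤ 0.3 * 2.71^8 + (0.71/0.59) * 2.1^8 := by gcongr
        _ ≤ 1532 := by norm_num
    | succ n ih =>
      rw [show n+1+8 = (n+8)+1 by omega]
      rw [hstep (n+8)]
      have h2 : -(0.71 * 2.1^(n+8)) ≤ b (n+8) := neg_le_of_abs_le (hbb (n+8)).1
      have F1 : α * (0.3 * α^(n+8) + D * 2.1^(n+8)) ≤ α * A (n+8) :=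
        mul_le_mul_of_nonneg_left ih (le_of_lt hα0)
      have F2 : (D * α) * 2.1^(n+8) = (D * 2.1 + 0.71) * 2.1^(n+8) := by rw [hDα]
      have e1 : α^((n+8)+1) = α^(n+8) * α := pow_succ α (n+8)
      have e2 : (2.1:ℝ)^((n+8)+1) = 2.1^(n+8) * 2.1 := pow_succ 2.1 (n+8)
      rw [e1, e2]
      nlinarith [F1, F2, h2]
  have hba : Tendsto (fun n => b n / A n) atTop (𝓝 0) := by
    apply squeeze_zero_norm' (a := fun n => (0.71/0.3) * (2.1/α)^n)
    · filter_upwards [eventually_ge_atTop 8] with n hn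
      obtain ⟨m, rfl⟩ := Nat.exists_eq_add_of_le hn
      rw [show 8+m = m+8 by omega]
      have hlm := hlow m
      have hd2 : (0:ℝ) ≤ D * 2.1^(m+8) := by positivity
      have hAlow : 0.3 * α^(m+8) ≤ A (m+8) := by linarith
      have hb' : |b (m+8)| ≤ 0.71 * 2.1^(m+8) := (hbb (m+8)).1
      have hApos' := hApos (m+8)
      rw [Real.norm_eq_abs, abs_div, abs_of_pos hApos']
      rw [div_le_iff₀ hApos']
      have hαpow : (0:ℝ) < α^(m+8) := by positivity
      calc |b (m+8)| ≤ 0.71 * 2.1^(m+8) := hb'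
        _ = (0.71/0.3) * (2.1/α)^(m+8) * (0.3 * α^(m+8)) := by
            rw [div_pow]
            field_simp
        _ ≤ (0.71/0.3) * (2.1/α)^(m+8) * A (m+8) := by gcongr
    · rw [show (0:ℝ) = (0.71/0.3) * 0 by ring]
      apply Tendsto.const_mul
      apply tendsto_pow_atTop_nhds_zero_of_lt_one
      · positivity
      · rw [div_lt_one hα0]; linarith
  have hq : Tendsto (fun n => A (n+1) / A n) atTop (𝓝 α) := by
    have h0 : Tendsto (fun n : ℕ => α + b n / A n) atTop (𝓝 (α + 0)) :=
      tendsto_const_nhds.add hba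
    rw [add_zero] at h0
    refine h0.congr fun n => ?_
    rw [hstep n, add_div, mul_div_assoc, div_self (hAne n), mul_one]
  have hq1 : Tendsto (fun n : ℕ => A (n+2) / A (n+1)) atTop (𝓝 α) :=
    hq.comp (tendsto_add_atTop_nat 1)
  have hS2A : ∀ n, (S2 n : ℝ) = A (n+1) - A n := by
    intro n
    have h := S1_succ n
    simp only [hA]
    push_cast [h]
    ring
  have hS2pos : ∀ n, (0:ℝ) < A (n+1) - A n := by
    intro n
    rw [← hS2A]
    exact_mod_cast S2_pos n
  constructor
  · refine (hq.sub_const 1).congr fun n => ?_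
    rw [hS2A, sub_div, div_self (hAne n)]
  · have hS3A : ∀ n, (S3 n : ℝ) = (A (n+2) - A (n+1)) - (A (n+1) - A n) := by
      intro n
      have h : S2 (n+1) = S2 n + S3 n := S2_succ n
      have h2 : (S2 (n+1) : ℝ) = A (n+2) - A (n+1) := hS2A (n+1)
      have h3 : (S2 n : ℝ) = A (n+1) - A n := hS2A n
      push_cast [h] at h2
      linarith
    have hlim : Tendsto (fun n : ℕ => ((A (n+2) / A (n+1) - 1) * (A (n+1) / A n)) / (A (n+1) / A n - 1) - 1)
        atTop (𝓝 (((α - 1) * α) / (α - 1) - 1)) := by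
      refine Tendsto.sub_const ?_ 1
      apply Tendsto.div ((hq1.sub_const 1).mul hq) (hq.sub_const 1)
      intro h
      have : α = 1 := by linarith [sub_eq_zero.mp h]
      linarith
    have hval : ((α - 1) * α) / (α - 1) - 1 = α - 1 := by
      rw [mul_comm, mul_div_assoc, div_self (by intro h; nlinarith [sub_eq_zero.mp h]), mul_one]
    rw [hval] at hlim
    refine hlim.congr fun n => ?_
    have h1 := hAne n
    have h2 := hAne (n+1)
    have h3 := (hS2pos n).ne'
    have e1 : A (n+2)/A (n+1) - 1 = (A (n+2) - A (n+1))/A (n+1) := by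
      rw [sub_div, div_self h2]
    have e2 : A (n+1)/A n - 1 = (A (n+1) - A n)/A n := by
      rw [sub_div, div_self h1]
    have e3 : (A (n+2) - A (n+1))/A (n+1) * (A (n+1)/A n) = (A (n+2) - A (n+1))/A n := by
      rw [div_mul_div_comm, mul_comm (A (n+1)), mul_div_mul_right _ _ h2]
    have e4 : ((A (n+2) - A (n+1))/A n) / ((A (n+1) - A n)/A n)
        = (A (n+2) - A (n+1))/(A (n+1) - A n) := by
      rw [div_div_div_comm, div_self h1, div_one]
    have e5 : ((A (n+2) - A (n+1)) - (A (n+1) - A n))/(A (n+1) - A n)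
        = (A (n+2) - A (n+1))/(A (n+1) - A n) - 1 := by
      rw [sub_div, div_self h3]
    rw [hS3A, hS2A, e1, e2, e3, e4, e5]
end

section
/- Let S be the set of all triples appearing in the TRIP-Stern sequence for (e,e,e), i.e., S = {Δ(v) : v a finite word in {0,1}, including the empty word with Δ(∅) = (1,1,1)}. Then for every X ∈ S with X ≠ (1,1,1), there exists a unique Y ∈ S such that X = Y·A₀ or X = Y·A₁. -/
/-- The set of all triples appearing in the TRIP-Stern sequence for `(e,e,e)`. -/
def TS : Set (ℤ × ℤ × ℤ) := {p | ∃ v : List Bool, delta v = p}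

/-- Invariant: entries are increasing, positive, and the middle entry equals the
last only at the root `(1,1,1)`. -/
def TSInv (p : ℤ × ℤ × ℤ) : Prop :=
  1 ≤ p.1 ∧ p.1 ≤ p.2.1 ∧ p.2.1 ≤ p.2.2 ∧ (p.2.1 = p.2.2 → p = (1, 1, 1))

lemma tsinv_step (p : ℤ × ℤ × ℤ) (h : TSInv p) (i : Bool) : TSInv (step p i) := by
  obtain ⟨a, b, c⟩ := p
  cases i <;> simp [step, f0, f1, TSInv, Prod.mk.injEq] at * <;> omega

lemma tsinv_fold (v : List Bool) : ∀ p : ℤ × ℤ × ℤ, TSInv p → TSInv (v.foldl step p) := by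
  induction v with
  | nil => intro p hp; exact hp
  | cons i w ih => intro p hp; exact ih _ (tsinv_step p hp i)

lemma tsinv_delta (v : List Bool) : TSInv (delta v) := by
  apply tsinv_fold
  simp [TSInv]

lemma mem_inv {p : ℤ × ℤ × ℤ} (h : p ∈ TS) : TSInv p := by
  obtain ⟨v, rfl⟩ := h; exact tsinv_delta v

lemma delta_concat (v : List Bool) (i : Bool) :
    delta (v ++ [i]) = step (delta v) i := by
  simp [delta, List.foldl_append]

lemma parents_eq (X Y Y' : ℤ × ℤ × ℤ) (hY : TSInv Y) (hY' : TSInv Y')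
    (h1 : f0 Y = X ∨ f1 Y = X) (h2 : f0 Y' = X ∨ f1 Y' = X) : Y' = Y := by
  obtain ⟨a, b, c⟩ := Y
  obtain ⟨a', b', c'⟩ := Y'
  obtain ⟨x, y, z⟩ := X
  rcases h1 with h1 | h1 <;> rcases h2 with h2 | h2 <;>
    simp [f0, f1, TSInv, Prod.mk.injEq] at * <;> omega

/-- For every triple `X` in the TRIP-Stern sequence for `(e,e,e)` with `X ≠ (1,1,1)`,
there is a unique `Y` in the sequence with `X = Y·A₀` or `X = Y·A₁`. -/
theorem unique_parent (X : ℤ × ℤ × ℤ) (hX : X ∈ TS) (hne : X ≠ (1, 1, 1)) :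
    ∃! Y : ℤ × ℤ × ℤ, Y ∈ TS ∧ (f0 Y = X ∨ f1 Y = X) := by
  obtain ⟨v, hv⟩ := hX
  rcases List.eq_nil_or_concat v with rfl | ⟨w, i, rfl⟩
  · exact absurd hv.symm hne
  · refine ⟨delta w, ⟨⟨w, rfl⟩, ?_⟩, ?_⟩
    · rw [List.concat_eq_append, delta_concat] at hv
      cases i
      · left; simpa [step] using hv
      · right; simpa [step] using hv
    · rintro Y' ⟨hY', hor'⟩
      rw [List.concat_eq_append, delta_concat] at hv
      have hor : f0 (delta w) = X ∨ f1 (delta w) = X := by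
        cases i
        · left; simpa [step] using hv
        · right; simpa [step] using hv
      exact parents_eq X (delta w) Y' (tsinv_delta w) (mem_inv hY') hor hor'
end
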